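/- Let h, k ∈ ℝⁿ with ‖h‖ > 1 and ‖k‖ > 1, suppose k is a scalar multiple of h, and assume there is no u ∈ ℝⁿ with ‖u‖ < 1 and h·u = 1 = k·u. Set S₀=√(‖h‖²−1) and S₁=√(‖k‖²−1). Then the pairs (u,v) of unit vectors satisfying h·u = 1 and k·v = 1 with minimal ‖u−v‖ are exactly the pairs u = h/‖h‖² + (S₀/‖h‖)·w, v = k/‖k‖² + (S₁/‖k‖)·w, where w ranges over all unit vectors with h·w = 0; moreover the value of ‖u−v‖ is the same for every such w. -/

import Mathlib

open scoped RealInnerProductSpace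

section aux
variable {E : Type*} [NormedAddCommGroup E] [InnerProductSpace ℝ E]

lemma aux_r_pos {h : E} (hh : 1 < ‖h‖) : 0 < Real.sqrt (‖h‖^2-1)/‖h‖ := by
  have h0 : (0:ℝ) < ‖h‖ := lt_trans one_pos hh
  exact div_pos (Real.sqrt_pos.2 (by nlinarith)) h0

lemma aux_r_sq {h : E} (hh : 1 < ‖h‖) :
    (Real.sqrt (‖h‖^2-1)/‖h‖)^2 = 1 - (‖h‖^2)⁻¹ := by
  have h0 : (0:ℝ) < ‖h‖ := lt_trans one_pos hh
  rw [div_pow, Real.sq_sqrt (by nlinarith)]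
  field_simp

lemma aux_param {h u : E} (hh : 1 < ‖h‖) (hu : ‖u‖ = 1) (hip : ⟪h,u⟫ = 1) :
    ∃ w : E, ‖w‖ = 1 ∧ ⟪h,w⟫ = 0 ∧
      u = (‖h‖^2)⁻¹ • h + (Real.sqrt (‖h‖^2-1)/‖h‖) • w := by
  have h0 : (0:ℝ) < ‖h‖ := lt_trans one_pos hh
  set r := Real.sqrt (‖h‖^2-1)/‖h‖ with hr
  have hrpos : 0 < r := aux_r_pos hh
  set a : E := (‖h‖^2)⁻¹ • h with ha
  have hia : ⟪h, a⟫ = 1 := by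
    rw [ha, real_inner_smul_right, real_inner_self_eq_norm_sq]
    field_simp
  have hiua : ⟪u, a⟫ = (‖h‖^2)⁻¹ := by
    rw [ha, real_inner_smul_right, real_inner_comm, hip, mul_one]
  have hna : ‖a‖^2 = (‖h‖^2)⁻¹ := by
    rw [ha, norm_smul]
    rw [Real.norm_eq_abs, abs_of_pos (by positivity)]
    field_simp
  have hdiff : ‖u - a‖^2 = r^2 := by
    rw [norm_sub_sq_real, hu, hiua, hna, aux_r_sq hh]; ring
  have hnd : ‖u - a‖ = r := by nlinarith [norm_nonneg (u - a)]
  refine ⟨r⁻¹ • (u - a), ?_, ?_, ?_⟩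
  · rw [norm_smul, hnd, Real.norm_eq_abs, abs_of_pos (by positivity)]
    field_simp
  · rw [real_inner_smul_right, inner_sub_right, hip, hia]
    ring
  · rw [smul_inv_smul₀ hrpos.ne']
    abel

lemma aux_adm {h w : E} (hh : 1 < ‖h‖) (hw : ‖w‖ = 1) (hip : ⟪h,w⟫ = 0) :
    ‖(‖h‖^2)⁻¹ • h + (Real.sqrt (‖h‖^2-1)/‖h‖) • w‖ = 1 ∧
    ⟪h, (‖h‖^2)⁻¹ • h + (Real.sqrt (‖h‖^2-1)/‖h‖) • w⟫ = 1 := by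
  have h0 : (0:ℝ) < ‖h‖ := lt_trans one_pos hh
  set r := Real.sqrt (‖h‖^2-1)/‖h‖ with hr
  have hsq : ‖(‖h‖^2)⁻¹ • h + r • w‖^2 = 1 := by
    rw [norm_add_sq_real, real_inner_smul_left, real_inner_smul_right, hip,
      norm_smul, norm_smul, Real.norm_eq_abs, Real.norm_eq_abs,
      abs_of_pos (show (0:ℝ) < (‖h‖^2)⁻¹ by positivity),
      abs_of_pos (aux_r_pos hh), mul_pow, mul_pow, hw, aux_r_sq hh]
    field_simp
    ring
  constructor
  · nlinarith [norm_nonneg ((‖h‖^2)⁻¹ • h + r • w)]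
  · rw [inner_add_right, real_inner_smul_right, real_inner_smul_right, hip,
      real_inner_self_eq_norm_sq]
    field_simp
    ring

lemma aux_dist {a b w₁ w₂ : E} (ha1 : ⟪a,w₁⟫ = 0) (ha2 : ⟪a,w₂⟫ = 0)
    (hb1 : ⟪b,w₁⟫ = 0) (hb2 : ⟪b,w₂⟫ = 0) (hw1 : ‖w₁‖ = 1) (hw2 : ‖w₂‖ = 1)
    (r₀ r₁ : ℝ) :
    ‖(a + r₀ • w₁) - (b + r₁ • w₂)‖^2
      = ‖a - b‖^2 + r₀^2 + r₁^2 - 2*r₀*r₁*⟪w₁,w₂⟫ := by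
  have e1 : ⟪w₁,a⟫ = 0 := by rw [real_inner_comm]; exact ha1
  have e2 : ⟪w₂,a⟫ = 0 := by rw [real_inner_comm]; exact ha2
  have e3 : ⟪w₁,b⟫ = 0 := by rw [real_inner_comm]; exact hb1
  have e4 : ⟪w₂,b⟫ = 0 := by rw [real_inner_comm]; exact hb2
  have hw1' : ⟪w₁,w₁⟫ = 1 := by rw [real_inner_self_eq_norm_sq, hw1]; norm_num
  have hw2' : ⟪w₂,w₂⟫ = 1 := by rw [real_inner_self_eq_norm_sq, hw2]; norm_num
  have hc : ⟪w₂,w₁⟫ = ⟪w₁,w₂⟫ := real_inner_comm _ _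
  rw [← real_inner_self_eq_norm_sq, ← real_inner_self_eq_norm_sq]
  simp only [inner_sub_left, inner_sub_right, inner_add_left, inner_add_right,
    real_inner_smul_left, real_inner_smul_right, e1, e2, e3, e4, ha1, ha2, hb1, hb2,
    hw1', hw2', hc]
  ring

end aux

set_option maxHeartbeats 2000000 in
/-- Proposition (parallel case): for `h, k` with `‖h‖ > 1`, `‖k‖ > 1`, `k` a scalar multiple
of `h`, and no common solution `u` of `h·u = 1 = k·u` with `‖u‖ < 1`, the pairs `(u,v)` of
unit vectors with `h·u = 1`, `k·v = 1` minimizing `‖u - v‖` are exactly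
`u = h/‖h‖² + (S₀/‖h‖)w`, `v = k/‖k‖² + (S₁/‖k‖)w` for unit vectors `w ⟂ h`; moreover
`‖u - v‖` has the same value for every such `w`. -/
theorem stmt9 {n : ℕ} (hn : 2 ≤ n) (h k : EuclideanSpace ℝ (Fin n))
    (hh : 1 < ‖h‖) (hk : 1 < ‖k‖) (hpar : ∃ c : ℝ, k = c • h)
    (hno : ¬ ∃ u : EuclideanSpace ℝ (Fin n), ‖u‖ < 1 ∧ ⟪h, u⟫ = 1 ∧ ⟪k, u⟫ = 1) :
    (∀ u v : EuclideanSpace ℝ (Fin n),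
      (‖u‖ = 1 ∧ ‖v‖ = 1 ∧ ⟪h, u⟫ = 1 ∧ ⟪k, v⟫ = 1 ∧
        ∀ u' v' : EuclideanSpace ℝ (Fin n),
          ‖u'‖ = 1 → ‖v'‖ = 1 → ⟪h, u'⟫ = 1 → ⟪k, v'⟫ = 1 → ‖u - v‖ ≤ ‖u' - v'‖)
      ↔ ∃ w : EuclideanSpace ℝ (Fin n), ‖w‖ = 1 ∧ ⟪h, w⟫ = 0 ∧
          u = (‖h‖ ^ 2)⁻¹ • h + (Real.sqrt (‖h‖ ^ 2 - 1) / ‖h‖) • w ∧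
          v = (‖k‖ ^ 2)⁻¹ • k + (Real.sqrt (‖k‖ ^ 2 - 1) / ‖k‖) • w) ∧
    (∀ w w' : EuclideanSpace ℝ (Fin n),
      ‖w‖ = 1 → ⟪h, w⟫ = 0 → ‖w'‖ = 1 → ⟪h, w'⟫ = 0 →
      ‖((‖h‖ ^ 2)⁻¹ • h + (Real.sqrt (‖h‖ ^ 2 - 1) / ‖h‖) • w)
          - ((‖k‖ ^ 2)⁻¹ • k + (Real.sqrt (‖k‖ ^ 2 - 1) / ‖k‖) • w)‖
        = ‖((‖h‖ ^ 2)⁻¹ • h + (Real.sqrt (‖h‖ ^ 2 - 1) / ‖h‖) • w')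
          - ((‖k‖ ^ 2)⁻¹ • k + (Real.sqrt (‖k‖ ^ 2 - 1) / ‖k‖) • w')‖) := by
  obtain ⟨c, hc⟩ := hpar
  have hc0 : c ≠ 0 := by
    rintro rfl
    have : k = 0 := by simp [hc]
    rw [this] at hk; simp at hk; linarith
  have hkw : ∀ w : EuclideanSpace ℝ (Fin n), ⟪h,w⟫ = 0 → ⟪k,w⟫ = 0 := by
    intro w hw; rw [hc, real_inner_smul_left, hw, mul_zero]
  have hhw : ∀ w : EuclideanSpace ℝ (Fin n), ⟪k,w⟫ = 0 → ⟪h,w⟫ = 0 := by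
    intro w hw
    rw [hc, real_inner_smul_left] at hw
    exact (mul_eq_zero.1 hw).resolve_left hc0
  set r₀ := Real.sqrt (‖h‖ ^ 2 - 1) / ‖h‖ with hr₀
  set r₁ := Real.sqrt (‖k‖ ^ 2 - 1) / ‖k‖ with hr₁
  set a : EuclideanSpace ℝ (Fin n) := (‖h‖ ^ 2)⁻¹ • h with hadef
  set b : EuclideanSpace ℝ (Fin n) := (‖k‖ ^ 2)⁻¹ • k with hbdef
  have haw : ∀ w : EuclideanSpace ℝ (Fin n), ⟪h,w⟫ = 0 → ⟪a,w⟫ = 0 := by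
    intro w hw; rw [hadef, real_inner_smul_left, hw, mul_zero]
  have hbw : ∀ w : EuclideanSpace ℝ (Fin n), ⟪h,w⟫ = 0 → ⟪b,w⟫ = 0 := by
    intro w hw; rw [hbdef, real_inner_smul_left, hkw w hw, mul_zero]
  have D : ∀ w₁ w₂ : EuclideanSpace ℝ (Fin n), ‖w₁‖ = 1 → ⟪h,w₁⟫ = 0 →
      ‖w₂‖ = 1 → ⟪h,w₂⟫ = 0 →
      ‖(a + r₀ • w₁) - (b + r₁ • w₂)‖^2
        = ‖a - b‖^2 + r₀^2 + r₁^2 - 2*r₀*r₁*⟪w₁,w₂⟫ := by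
    intro w₁ w₂ hw1 ho1 hw2 ho2
    exact aux_dist (haw _ ho1) (haw _ ho2) (hbw _ ho1) (hbw _ ho2) hw1 hw2 r₀ r₁
  have selfinner : ∀ w : EuclideanSpace ℝ (Fin n), ‖w‖ = 1 → ⟪w,w⟫ = 1 := by
    intro w hw; rw [real_inner_self_eq_norm_sq, hw]; norm_num
  have normle : ∀ x y : EuclideanSpace ℝ (Fin n), ‖x‖^2 ≤ ‖y‖^2 → ‖x‖ ≤ ‖y‖ := by
    intro x y hxy
    have := Real.sqrt_le_sqrt hxy
    rwa [Real.sqrt_sq (norm_nonneg _), Real.sqrt_sq (norm_nonneg _)] at this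
  have hr₀pos : 0 < r₀ := aux_r_pos hh
  have hr₁pos : 0 < r₁ := aux_r_pos hk
  constructor
  · intro u v
    constructor
    · rintro ⟨hu, hv, hhu, hkv, hmin⟩
      obtain ⟨w, hw1, hw2, hue⟩ := aux_param hh hu hhu
      obtain ⟨w', hw'1, hw'2k, hve⟩ := aux_param hk hv hkv
      rw [← hadef, ← hr₀] at hue
      rw [← hbdef, ← hr₁] at hve
      have hw'2 : ⟪h, w'⟫ = 0 := hhw _ hw'2k
      have adm := aux_adm hk hw1 (hkw w hw2)
      have hle : ‖u - v‖ ≤ ‖u - (b + r₁ • w)‖ :=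
        hmin u (b + r₁ • w) hu adm.1 hhu adm.2
      have hsqle : ‖u - v‖^2 ≤ ‖u - (b + r₁ • w)‖^2 := by
        have h1 := norm_nonneg (u - v)
        nlinarith
      rw [hue, hve] at hsqle
      rw [D w w' hw1 hw2 hw'1 hw'2, D w w hw1 hw2 hw1 hw2, selfinner w hw1] at hsqle
      have hge1 : (1:ℝ) ≤ ⟪w, w'⟫ := by nlinarith [mul_pos hr₀pos hr₁pos]
      have hle1 : ⟪w, w'⟫ ≤ 1 := by
        have := real_inner_le_norm w w'
        rwa [hw1, hw'1, one_mul] at this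
      have heq : ⟪w, w'⟫ = 1 := le_antisymm hle1 hge1
      have hwe : w' = w := by
        have hz : ‖w - w'‖^2 = 0 := by
          rw [norm_sub_sq_real, hw1, hw'1, heq]; norm_num
        have : ‖w - w'‖ = 0 := by nlinarith [norm_nonneg (w - w')]
        have := norm_eq_zero.1 this
        have := sub_eq_zero.1 this
        exact this.symm
      exact ⟨w, hw1, hw2, hue, by rw [hve, hwe]⟩
    · rintro ⟨w, hw1, hw2, hue, hve⟩
      have admu := aux_adm hh hw1 hw2
      have admv := aux_adm hk hw1 (hkw w hw2)
      refine ⟨by rw [hue]; exact admu.1, by rw [hve]; exact admv.1,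
        by rw [hue]; exact admu.2, by rw [hve]; exact admv.2, ?_⟩
      intro u' v' hu' hv' hhu' hkv'
      obtain ⟨w₁, hw11, hw12, hue'⟩ := aux_param hh hu' hhu'
      obtain ⟨w₂, hw21, hw22k, hve'⟩ := aux_param hk hv' hkv'
      rw [← hadef, ← hr₀] at hue'
      rw [← hbdef, ← hr₁] at hve'
      have hw22 : ⟪h, w₂⟫ = 0 := hhw _ hw22k
      apply normle
      rw [hue, hve, hue', hve', D w w hw1 hw2 hw1 hw2, selfinner w hw1,
        D w₁ w₂ hw11 hw12 hw21 hw22]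
      have hle1 : ⟪w₁, w₂⟫ ≤ 1 := by
        have := real_inner_le_norm w₁ w₂
        rwa [hw11, hw21, one_mul] at this
      have key : ∀ T ip : ℝ, ip ≤ 1 →
          T + r₀^2 + r₁^2 - 2*r₀*r₁*1 ≤ T + r₀^2 + r₁^2 - 2*r₀*r₁*ip := by
        intro T ip hip
        nlinarith [mul_pos hr₀pos hr₁pos]
      exact key _ _ hle1
  · intro w w' hw hwo hw' hw'o
    have h1 := D w w hw hwo hw hwo
    have h2 := D w' w' hw' hw'o hw' hw'o
    rw [selfinner w hw] at h1
    rw [selfinner w' hw'] at h2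
    have hsq : ‖(a + r₀ • w) - (b + r₁ • w)‖^2 = ‖(a + r₀ • w') - (b + r₁ • w')‖^2 := by
      rw [h1, h2]
    have := congrArg Real.sqrt hsq
    rwa [Real.sqrt_sq (norm_nonneg _), Real.sqrt_sq (norm_nonneg _)] at this
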